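/- Let θ be a root of t^3 + t^2 - 2t - 1. The only integer solutions (x, y) to x^2 + θxy + y^2 = ±(2 - θ) with x, y ∈ ℤ are (x, y) = (1, -1) and (x, y) = (-1, 1). -/

import Mathlib

lemma theta_lin_indep (θ : ℝ) (hθ : θ ^ 3 + θ ^ 2 - 2 * θ - 1 = 0)
    (a b : ℤ) (hab : (a : ℝ) + (b : ℝ) * θ = 0) : a = 0 ∧ b = 0 := by
  by_cases hb : b = 0
  · subst hb
    simp at hab
    exact ⟨by exact_mod_cast hab, rfl⟩
  · exfalso
    have hbR : (b : ℝ) ≠ 0 := Int.cast_ne_zero.mpr hb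
    have hθeq : θ = -(a : ℝ) / b := by field_simp at hab ⊢; linarith
    have hint : -a ^ 3 + a ^ 2 * b + 2 * a * b ^ 2 - b ^ 3 = 0 := by
      have h0 : ((-a ^ 3 + a ^ 2 * b + 2 * a * b ^ 2 - b ^ 3 : ℤ) : ℝ)
          = (b : ℝ) ^ 3 * (θ ^ 3 + θ ^ 2 - 2 * θ - 1) := by
        push_cast
        rw [hθeq]
        field_simp
        ring
      rw [hθ, mul_zero] at h0
      exact_mod_cast h0
    set d : ℤ := (Int.gcd a b : ℤ) with hd
    have hdpos : (0 : ℤ) < d := by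
      have : a.gcd b ≠ 0 := by
        simpa [Int.gcd_eq_zero_iff] using fun h : a = 0 ∧ b = 0 => hb h.2
      exact Int.natCast_pos.mpr (Nat.pos_of_ne_zero this)
    have hda : d ∣ a := Int.gcd_dvd_left a b
    have hdb : d ∣ b := Int.gcd_dvd_right a b
    obtain ⟨a₁, ha₁⟩ := hda
    obtain ⟨b₁, hb₁⟩ := hdb
    have hcop : IsCoprime a₁ b₁ := by
      rw [Int.isCoprime_iff_gcd_eq_one]
      have h1 : a / d = a₁ := by rw [ha₁]; exact Int.mul_ediv_cancel_left _ (ne_of_gt hdpos)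
      have h2 : b / d = b₁ := by rw [hb₁]; exact Int.mul_ediv_cancel_left _ (ne_of_gt hdpos)
      have h3 := Int.gcd_div_gcd_div_gcd (i := a) (j := b) (Nat.pos_of_ne_zero
        (by simpa [Int.gcd_eq_zero_iff] using fun h : a = 0 ∧ b = 0 => hb h.2))
      rwa [← hd, h1, h2] at h3
    have hint1 : -a₁ ^ 3 + a₁ ^ 2 * b₁ + 2 * a₁ * b₁ ^ 2 - b₁ ^ 3 = 0 := by
      have h3 : d ^ 3 * (-a₁ ^ 3 + a₁ ^ 2 * b₁ + 2 * a₁ * b₁ ^ 2 - b₁ ^ 3) = 0 := by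
        rw [ha₁, hb₁] at hint; ring_nf at hint ⊢; linarith
      rcases mul_eq_zero.mp h3 with h | h
      · exact absurd h (pow_ne_zero _ (ne_of_gt hdpos))
      · exact h
    have hb₁dvd : b₁ ∣ a₁ ^ 3 := ⟨a₁ ^ 2 + 2 * a₁ * b₁ - b₁ ^ 2, by linarith [hint1, sq_nonneg a₁]⟩
    have ha₁dvd : a₁ ∣ b₁ ^ 3 := ⟨-(a₁ ^ 2) + a₁ * b₁ + 2 * b₁ ^ 2, by linarith [hint1]⟩
    have hb₁unit : IsUnit b₁ := (hcop.symm.pow_right (n := 3)).isUnit_of_dvd hb₁dvd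
    have ha₁unit : IsUnit a₁ := (hcop.pow_right (n := 3)).isUnit_of_dvd ha₁dvd
    rcases Int.isUnit_iff.mp hb₁unit with hB | hB <;>
      rcases Int.isUnit_iff.mp ha₁unit with hA | hA <;>
      subst hA <;> subst hB <;> norm_num at hint1

theorem norm_form_eq_pm_two_sub_theta (θ : ℝ) (hθ : θ ^ 3 + θ ^ 2 - 2 * θ - 1 = 0)
    (x y : ℤ)
    (h : (x : ℝ) ^ 2 + θ * x * y + y ^ 2 = 2 - θ ∨
         (x : ℝ) ^ 2 + θ * x * y + y ^ 2 = -(2 - θ)) :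
    (x = 1 ∧ y = -1) ∨ (x = -1 ∧ y = 1) := by
  rcases h with h | h
  · have key := theta_lin_indep θ hθ (x ^ 2 + y ^ 2 - 2) (x * y + 1) (by push_cast; linarith)
    have hxy : x * y = -1 := by have := key.2; linarith
    rcases Int.isUnit_iff.mp (IsUnit.of_mul_eq_one (a := x) (-y) (by linarith [hxy])) with hx | hx
    · left; constructor
      · exact hx
      · subst hx; omega
    · right; constructor
      · exact hx
      · subst hx; omega
  · have key := theta_lin_indep θ hθ (x ^ 2 + y ^ 2 + 2) (x * y - 1) (by push_cast; linarith)
    exfalso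
    nlinarith [key.1, sq_nonneg x, sq_nonneg y]
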